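/- Let p > 1 and 0 < q < 1, let x† ≠ 0 satisfy Ax† = y and x† ∈ M_{q,w}, and suppose for every k ∈ supp(x†) there exists f_k ∈ Y* with u_k = A*f_k. If the regularization parameter α* = α*(δ, y^δ) ∈ Δ_θ is chosen according to the sequential discrepancy principle with τ > 1, then α*(δ, y^δ) ≥ (θ / (p 2^{p−1})) · ((τ^p − 1)/(τ^p + 1)) · Φ_{q,w}((τ − 1)δ), where Φ_{q,w}(t) := t^p / φ_{q,w}(t) and φ_{q,w}(t) := 2 inf_{n∈ℕ} ( Σ_{k=n+1}^∞ w_k |⟨x†, u_k⟩_X|^q + t^q Σ_{k∈S_n(x†)} w_k ‖f_k‖_{Y*}^q ). -/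

import Mathlib

open scoped RealInnerProductSpace

/-- The penalty `R_{q,w}(x) = Σ_k w_k |⟨x, u_k⟩|^q`. -/
noncomputable def Rqw {X : Type*} [NormedAddCommGroup X] [InnerProductSpace ℝ X]
    (u : ℕ → X) (w : ℕ → ℝ) (q : ℝ) (x : X) : ℝ :=
  ∑' k : ℕ, w k * |⟪x, u k⟫| ^ q

/-- Membership `x ∈ M_{q,w}`, i.e. `R_{q,w}(x) < ∞`. -/
def MemMqw {X : Type*} [NormedAddCommGroup X] [InnerProductSpace ℝ X]
    (u : ℕ → X) (w : ℕ → ℝ) (q : ℝ) (x : X) : Prop :=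
  Summable fun k : ℕ => w k * |⟪x, u k⟫| ^ q

/-- The index function
`φ_{q,w}(t) = 2 inf_n ( Σ_{k ≥ n} w_k |⟨x†,u_k⟩|^q + t^q Σ_{k ∈ S_n(x†)} w_k ‖f_k‖^q )`,
where `S_n(x†)` consists of the indices `k < n` lying in the support of `x†`. -/
noncomputable def phiIdx {X Y : Type*} [NormedAddCommGroup X] [InnerProductSpace ℝ X]
    [NormedAddCommGroup Y] [NormedSpace ℝ Y]
    (u : ℕ → X) (w : ℕ → ℝ) (q : ℝ) (xdag : X) (f : ℕ → Y →L[ℝ] ℝ) (t : ℝ) : ℝ :=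
  2 * ⨅ n : ℕ, ((∑' k : ℕ, if n ≤ k then w k * |⟪xdag, u k⟫| ^ q else 0)
      + t ^ q * ∑ k ∈ Finset.filter (fun k => ⟪xdag, u k⟫ ≠ 0) (Finset.range n),
          w k * ‖f k‖ ^ q)

/-- The Tikhonov functional `T_α^δ(x) = (1/p)‖Ax − y^δ‖^p + α R_{q,w}(x)`. -/
noncomputable def Tik {X Y : Type*} [NormedAddCommGroup X] [InnerProductSpace ℝ X]
    [NormedAddCommGroup Y] [NormedSpace ℝ Y]
    (u : ℕ → X) (w : ℕ → ℝ) (q : ℝ) (A : X →L[ℝ] Y) (p α : ℝ) (ydel : Y) (x : X) : ℝ :=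
  (1 / p) * ‖A x - ydel‖ ^ p + α * Rqw u w q x

/-- `xhat` is a (global) minimizer of the Tikhonov functional `T_α^δ`; since every
minimizer has finite value, this is expressed as: `xhat ∈ M_{q,w}` and `xhat` minimizes
`T_α^δ` over `M_{q,w}` (outside of `M_{q,w}` the functional is `+∞`). -/
def IsTikMinimizer {X Y : Type*} [NormedAddCommGroup X] [InnerProductSpace ℝ X]
    [NormedAddCommGroup Y] [NormedSpace ℝ Y]
    (u : ℕ → X) (w : ℕ → ℝ) (q : ℝ) (A : X →L[ℝ] Y) (p α : ℝ) (ydel : Y) (xhat : X) : Prop :=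
  MemMqw u w q xhat ∧
    ∀ x : X, MemMqw u w q x → Tik u w q A p α ydel xhat ≤ Tik u w q A p α ydel x

/-- The grid `Δ_θ = { θ^j α₀ : j ∈ ℤ }` of regularization parameters. -/
def Dtheta (θ α₀ : ℝ) : Set ℝ := {a : ℝ | ∃ j : ℤ, a = θ ^ j * α₀}

/-! ### Auxiliary lemmas -/

private lemma rpow_add_le_real {x y q : ℝ} (hx : 0 ≤ x) (hy : 0 ≤ y) (hq0 : 0 ≤ q) (hq1 : q ≤ 1) :
    (x + y) ^ q ≤ x ^ q + y ^ q := by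
  lift x to NNReal using hx
  lift y to NNReal using hy
  have := NNReal.rpow_add_le_add_rpow x y hq0 hq1
  exact_mod_cast this

private lemma abs_rpow_le_abs_add {a b q : ℝ} (hq0 : 0 ≤ q) (hq1 : q ≤ 1) :
    |a| ^ q ≤ |b| ^ q + |a - b| ^ q := by
  have h1 : |a| ≤ |b| + |a - b| := by
    calc |a| = |b + (a - b)| := by ring_nf
    _ ≤ |b| + |a - b| := abs_add_le _ _
  calc |a| ^ q ≤ (|b| + |a - b|) ^ q :=
        Real.rpow_le_rpow (abs_nonneg _) h1 hq0
    _ ≤ |b| ^ q + |a - b| ^ q :=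
        rpow_add_le_real (abs_nonneg _) (abs_nonneg _) hq0 hq1

private lemma two_rpow_ineq' {x y p : ℝ} (hx : 0 ≤ x) (hy : 0 ≤ y) (hp : 1 ≤ p) :
    (x + y) ^ p ≤ 2 ^ (p - 1) * (x ^ p + y ^ p) := by
  lift x to NNReal using hx
  lift y to NNReal using hy
  have := NNReal.rpow_add_le_mul_rpow_add_rpow x y hp
  exact_mod_cast this

private lemma rpow_split' {x : ℝ} (hx : 0 < x) (p : ℝ) : x ^ p = x ^ (p - 1) * x := by
  rw [← Real.rpow_add_one hx.ne' (p - 1)]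
  ring_nf

private lemma tsum_split_real (a : ℕ → ℝ) (ha : Summable a) (h0 : ∀ k, 0 ≤ a k) (n : ℕ) :
    ∑' k, a k = (∑' k, if n ≤ k then a k else 0) + ∑ k ∈ Finset.range n, a k := by
  have hs1 : Summable (fun k => if n ≤ k then a k else 0) :=
    Summable.of_nonneg_of_le (fun k => by split <;> simp [h0 k])
      (fun k => by split <;> simp [h0 k]) ha
  have hs2 : Summable (fun k => if k < n then a k else 0) :=
    summable_of_ne_finset_zero (s := Finset.range n)
      (fun k hk => by rw [if_neg]; simpa using hk)
  have hpt : ∀ k, a k = (if n ≤ k then a k else 0) + (if k < n then a k else 0) := by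
    intro k
    by_cases h : n ≤ k
    · simp [h, Nat.not_lt.mpr h]
    · simp [h, Nat.lt_of_not_le h]
  calc ∑' k, a k = ∑' k, ((if n ≤ k then a k else 0) + (if k < n then a k else 0)) :=
        tsum_congr hpt
    _ = (∑' k, if n ≤ k then a k else 0) + ∑' k, (if k < n then a k else 0) :=
        Summable.tsum_add hs1 hs2
    _ = (∑' k, if n ≤ k then a k else 0) + ∑ k ∈ Finset.range n, a k := by
        congr 1
        rw [tsum_eq_sum (s := Finset.range n) (fun k hk => by rw [if_neg]; simpa using hk)]
        exact Finset.sum_congr rfl fun k hk => if_pos (Finset.mem_range.mp hk)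

private noncomputable def gIdx {X Y : Type*} [NormedAddCommGroup X] [InnerProductSpace ℝ X]
    [NormedAddCommGroup Y] [NormedSpace ℝ Y]
    (u : ℕ → X) (w : ℕ → ℝ) (q : ℝ) (xdag : X) (f : ℕ → Y →L[ℝ] ℝ) (t : ℝ) (n : ℕ) : ℝ :=
  (∑' k : ℕ, if n ≤ k then w k * |⟪xdag, u k⟫| ^ q else 0)
      + t ^ q * ∑ k ∈ Finset.filter (fun k => ⟪xdag, u k⟫ ≠ 0) (Finset.range n),
          w k * ‖f k‖ ^ q

section AUX
variable {X Y : Type*} [NormedAddCommGroup X] [InnerProductSpace ℝ X]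
    [NormedAddCommGroup Y] [NormedSpace ℝ Y]
    (u : ℕ → X) (w : ℕ → ℝ) (q : ℝ) (xdag : X) (f : ℕ → Y →L[ℝ] ℝ)

private lemma gIdx_nonneg (hw : ∀ k, 0 ≤ w k) {t : ℝ} (ht : 0 ≤ t) (n : ℕ) :
    0 ≤ gIdx u w q xdag f t n := by
  unfold gIdx
  have h1 : 0 ≤ ∑' k : ℕ, if n ≤ k then w k * |⟪xdag, u k⟫| ^ q else 0 :=
    tsum_nonneg fun k => by
      split
      · exact mul_nonneg (hw k) (Real.rpow_nonneg (abs_nonneg _) _)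
      · exact le_refl 0
  have h2 : 0 ≤ ∑ k ∈ Finset.filter (fun k => ⟪xdag, u k⟫ ≠ 0) (Finset.range n),
      w k * ‖f k‖ ^ q :=
    Finset.sum_nonneg fun k _ => mul_nonneg (hw k) (Real.rpow_nonneg (norm_nonneg _) _)
  exact add_nonneg h1 (mul_nonneg (Real.rpow_nonneg ht _) h2)

private lemma gIdx_bddBelow (hw : ∀ k, 0 ≤ w k) {t : ℝ} (ht : 0 ≤ t) :
    BddBelow (Set.range (gIdx u w q xdag f t)) :=
  ⟨0, fun _ ⟨n, hn⟩ => hn ▸ gIdx_nonneg u w q xdag f hw ht n⟩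

private lemma gIdx_scale (hw : ∀ k, 0 ≤ w k) (hq1 : q ≤ 1)
    {t s : ℝ} (ht : 0 < t) (hts : t ≤ s) (n : ℕ) :
    gIdx u w q xdag f s n ≤ (s / t) * gIdx u w q xdag f t n := by
  have hs : 0 < s := ht.trans_le hts
  have hst1 : 1 ≤ s / t := (one_le_div ht).mpr hts
  unfold gIdx
  have h1 : 0 ≤ ∑' k : ℕ, if n ≤ k then w k * |⟪xdag, u k⟫| ^ q else 0 :=
    tsum_nonneg fun k => by
      split
      · exact mul_nonneg (hw k) (Real.rpow_nonneg (abs_nonneg _) _)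
      · exact le_refl 0
  have h2 : 0 ≤ ∑ k ∈ Finset.filter (fun k => ⟪xdag, u k⟫ ≠ 0) (Finset.range n),
      w k * ‖f k‖ ^ q :=
    Finset.sum_nonneg fun k _ => mul_nonneg (hw k) (Real.rpow_nonneg (norm_nonneg _) _)
  have hpow : s ^ q ≤ (s / t) * t ^ q := by
    have hmono : s ^ (q - 1) ≤ t ^ (q - 1) :=
      Real.rpow_le_rpow_of_nonpos ht hts (by linarith)
    have h3 : s ^ q = s ^ (q - 1) * s := by
      rw [← Real.rpow_add_one hs.ne']; ring_nf
    have h4 : (s / t) * t ^ q = t ^ (q - 1) * s := by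
      rw [Real.rpow_sub ht, Real.rpow_one]
      field_simp
    rw [h3, h4]
    exact mul_le_mul_of_nonneg_right hmono hs.le
  rw [mul_add]
  apply add_le_add
  · exact le_mul_of_one_le_left h1 hst1
  · calc s ^ q * _ ≤ ((s / t) * t ^ q) * _ := mul_le_mul_of_nonneg_right hpow h2
      _ = (s / t) * (t ^ q * _) := by ring

private lemma vi_per_n (A : X →L[ℝ] Y)
    (hf : ∀ k, ⟪xdag, u k⟫ ≠ 0 → ∀ x : X, ⟪u k, x⟫ = f k (A x))
    (hw : ∀ k, 0 ≤ w k) (hq0 : 0 < q) (hq1 : q ≤ 1)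
    (hxdag : MemMqw u w q xdag)
    (x : X) (hx : MemMqw u w q x) {s : ℝ} (hs : ‖A xdag - A x‖ ≤ s) (n : ℕ) :
    Rqw u w q xdag ≤ Rqw u w q x + gIdx u w q xdag f s n := by
  have hs0 : 0 ≤ s := (norm_nonneg _).trans hs
  set a : ℕ → ℝ := fun k => w k * |⟪xdag, u k⟫| ^ q with ha_def
  set b : ℕ → ℝ := fun k => w k * |⟪x, u k⟫| ^ q with hb_def
  have ha0 : ∀ k, 0 ≤ a k := fun k => mul_nonneg (hw k) (Real.rpow_nonneg (abs_nonneg _) _)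
  have hb0 : ∀ k, 0 ≤ b k := fun k => mul_nonneg (hw k) (Real.rpow_nonneg (abs_nonneg _) _)
  have hsplit := tsum_split_real a hxdag ha0 n
  have hfilter : ∑ k ∈ Finset.range n, a k
      = ∑ k ∈ Finset.filter (fun k => ⟪xdag, u k⟫ ≠ 0) (Finset.range n), a k := by
    symm
    apply Finset.sum_filter_of_ne
    intro k _ hak
    intro hzero
    apply hak
    simp [ha_def, hzero, Real.zero_rpow hq0.ne']
  have hpt : ∀ k ∈ Finset.filter (fun k => ⟪xdag, u k⟫ ≠ 0) (Finset.range n),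
      a k ≤ b k + w k * ‖f k‖ ^ q * s ^ q := by
    intro k hk
    have hk' : ⟪xdag, u k⟫ ≠ 0 := (Finset.mem_filter.mp hk).2
    have hdiff : ⟪xdag, u k⟫ - ⟪x, u k⟫ = f k (A xdag - A x) := by
      have h1 : ⟪u k, xdag - x⟫ = f k (A (xdag - x)) := hf k hk' (xdag - x)
      rw [inner_sub_right] at h1
      have e1 : ⟪xdag, u k⟫ = ⟪u k, xdag⟫ := by rw [real_inner_comm]
      have e2 : ⟪x, u k⟫ = ⟪u k, x⟫ := by rw [real_inner_comm]
      rw [e1, e2, h1, map_sub]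
    have habs : |⟪xdag, u k⟫ - ⟪x, u k⟫| ≤ ‖f k‖ * s := by
      rw [hdiff, ← Real.norm_eq_abs]
      calc ‖f k (A xdag - A x)‖ ≤ ‖f k‖ * ‖A xdag - A x‖ := (f k).le_opNorm _
        _ ≤ ‖f k‖ * s := by gcongr
    have hrpow : |⟪xdag, u k⟫| ^ q ≤ |⟪x, u k⟫| ^ q + ‖f k‖ ^ q * s ^ q := by
      calc |⟪xdag, u k⟫| ^ q ≤ |⟪x, u k⟫| ^ q + |⟪xdag, u k⟫ - ⟪x, u k⟫| ^ q :=
            abs_rpow_le_abs_add hq0.le hq1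
        _ ≤ |⟪x, u k⟫| ^ q + (‖f k‖ * s) ^ q :=
            add_le_add_right (Real.rpow_le_rpow (abs_nonneg _) habs hq0.le) _
        _ = |⟪x, u k⟫| ^ q + ‖f k‖ ^ q * s ^ q := by
            rw [Real.mul_rpow (norm_nonneg _) hs0]
    calc a k = w k * |⟪xdag, u k⟫| ^ q := rfl
      _ ≤ w k * (|⟪x, u k⟫| ^ q + ‖f k‖ ^ q * s ^ q) :=
          mul_le_mul_of_nonneg_left hrpow (hw k)
      _ = b k + w k * ‖f k‖ ^ q * s ^ q := by simp only [hb_def]; ring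
  have hsum : ∑ k ∈ Finset.filter (fun k => ⟪xdag, u k⟫ ≠ 0) (Finset.range n), a k
      ≤ Rqw u w q x + s ^ q * ∑ k ∈ Finset.filter (fun k => ⟪xdag, u k⟫ ≠ 0) (Finset.range n),
          w k * ‖f k‖ ^ q := by
    calc ∑ k ∈ _, a k ≤ ∑ k ∈ Finset.filter (fun k => ⟪xdag, u k⟫ ≠ 0) (Finset.range n),
          (b k + w k * ‖f k‖ ^ q * s ^ q) := Finset.sum_le_sum hpt
      _ = (∑ k ∈ Finset.filter (fun k => ⟪xdag, u k⟫ ≠ 0) (Finset.range n), b k)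
          + s ^ q * ∑ k ∈ Finset.filter (fun k => ⟪xdag, u k⟫ ≠ 0) (Finset.range n),
              w k * ‖f k‖ ^ q := by
          rw [Finset.sum_add_distrib, Finset.mul_sum]
          congr 1
          exact Finset.sum_congr rfl fun k _ => by ring
      _ ≤ _ := by
          gcongr
          exact Summable.sum_le_tsum _ (fun k _ => hb0 k) hx
  have htail : Rqw u w q xdag
      = (∑' k, if n ≤ k then a k else 0) + ∑ k ∈ Finset.range n, a k := hsplit
  rw [htail, hfilter]
  unfold gIdx
  linarith [hsum]

private lemma gIdx_inf_pos (hw : ∀ k, 0 < w k)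
    (hxdag : Summable fun k : ℕ => w k * |⟪xdag, u k⟫| ^ q)
    (k₀ : ℕ) (hk₀ : ⟪xdag, u k₀⟫ ≠ 0) (hfk : 0 < ‖f k₀‖)
    {t : ℝ} (ht : 0 < t) :
    0 < ⨅ n : ℕ, gIdx u w q xdag f t n := by
  set a : ℕ → ℝ := fun k => w k * |⟪xdag, u k⟫| ^ q with ha_def
  have ha0 : ∀ k, 0 ≤ a k := fun k => mul_nonneg (hw k).le (Real.rpow_nonneg (abs_nonneg _) _)
  set m : ℝ := min (w k₀ * |⟪xdag, u k₀⟫| ^ q) (t ^ q * (w k₀ * ‖f k₀‖ ^ q)) with hm_def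
  have hm : 0 < m := by
    apply lt_min
    · exact mul_pos (hw k₀) (Real.rpow_pos_of_pos (abs_pos.mpr hk₀) _)
    · exact mul_pos (Real.rpow_pos_of_pos ht _) (mul_pos (hw k₀) (Real.rpow_pos_of_pos hfk _))
  refine hm.trans_le (le_ciInf fun n => ?_)
  unfold gIdx
  rcases le_or_gt n k₀ with h | h
  · have hs1 : Summable (fun k => if n ≤ k then a k else 0) :=
      Summable.of_nonneg_of_le (fun k => by split <;> simp [ha0 k])
        (fun k => by split <;> simp [ha0 k]) hxdag
    have h1 : a k₀ ≤ ∑' k, if n ≤ k then a k else 0 := by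
      have := Summable.le_tsum hs1 k₀ (fun j _ => by split <;> simp [ha0 j])
      rwa [if_pos h] at this
    have h2 : 0 ≤ t ^ q * ∑ k ∈ Finset.filter (fun k => ⟪xdag, u k⟫ ≠ 0) (Finset.range n),
        w k * ‖f k‖ ^ q := by
      apply mul_nonneg (Real.rpow_nonneg ht.le _)
      exact Finset.sum_nonneg fun k _ =>
        mul_nonneg (hw k).le (Real.rpow_nonneg (norm_nonneg _) _)
    have hma : m ≤ a k₀ := min_le_left _ _
    linarith
  · have hmem : k₀ ∈ Finset.filter (fun k => ⟪xdag, u k⟫ ≠ 0) (Finset.range n) :=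
      Finset.mem_filter.mpr ⟨Finset.mem_range.mpr h, hk₀⟩
    have h1 : w k₀ * ‖f k₀‖ ^ q ≤ ∑ k ∈ Finset.filter (fun k => ⟪xdag, u k⟫ ≠ 0)
        (Finset.range n), w k * ‖f k‖ ^ q :=
      Finset.single_le_sum (fun k _ => mul_nonneg (hw k).le
        (Real.rpow_nonneg (norm_nonneg _) _)) hmem
    have h2 : 0 ≤ ∑' k, if n ≤ k then a k else 0 :=
      tsum_nonneg fun k => by split <;> simp [ha0 k]
    have h3 : t ^ q * (w k₀ * ‖f k₀‖ ^ q) ≤ t ^ q * ∑ k ∈ Finset.filter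
        (fun k => ⟪xdag, u k⟫ ≠ 0) (Finset.range n), w k * ‖f k‖ ^ q :=
      mul_le_mul_of_nonneg_left h1 (Real.rpow_nonneg ht.le _)
    have hma : m ≤ t ^ q * (w k₀ * ‖f k₀‖ ^ q) := min_le_right _ _
    linarith

private lemma gIdx_inf_scale (hw : ∀ k, 0 ≤ w k) (hq1 : q ≤ 1)
    {t s : ℝ} (ht : 0 < t) (hts : t ≤ s) :
    (⨅ n : ℕ, gIdx u w q xdag f s n) ≤ (s / t) * ⨅ n : ℕ, gIdx u w q xdag f t n := by
  have hst : 0 < s / t := div_pos (ht.trans_le hts) ht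
  have hbdd : BddBelow (Set.range (gIdx u w q xdag f s)) :=
    gIdx_bddBelow u w q xdag f hw (le_trans ht.le hts)
  rw [mul_comm, ← div_le_iff₀ hst]
  refine le_ciInf fun n => ?_
  rw [div_le_iff₀ hst]
  exact (ciInf_le hbdd n).trans
    ((gIdx_scale u w q xdag f hw hq1 ht hts n).trans_eq (mul_comm _ _))

end AUX

set_option maxHeartbeats 1000000 in
private lemma arith_S {τ δ d p : ℝ} (hτ : 1 < τ) (hδ : 0 < δ) (hp : 1 < p)
    (hd : τ * δ ≤ d) :
    (τ ^ p - 1) * ((τ - 1) * δ) ^ p * (d + δ)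
      ≤ 2 ^ p * (τ ^ p + 1) * ((τ - 1) * δ) * (d ^ p - δ ^ p) := by
  have hτ0 : (0:ℝ) < τ := by linarith
  have hd0 : 0 < d := lt_of_lt_of_le (by nlinarith) hd
  set t : ℝ := (τ - 1) * δ with ht_def
  have ht : 0 < t := by rw [ht_def]; nlinarith
  have hp0 : (0:ℝ) < p := by linarith
  have hp1 : (0:ℝ) ≤ p - 1 := by linarith
  have hP1 : 1 < τ ^ p := Real.one_lt_rpow_iff_of_pos hτ0 |>.mpr (Or.inl ⟨hτ, hp0⟩)
  have hPpos : 0 < τ ^ p := by linarith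
  have nP1 : (0:ℝ) ≤ τ ^ p - 1 := by linarith
  have fT : t ^ p = t ^ (p - 1) * t := rpow_split' ht p
  have fD : d ^ p = d ^ (p - 1) * d := rpow_split' hd0 p
  have fP : τ ^ p = τ ^ (p - 1) * τ := rpow_split' hτ0 p
  have f2 : (2:ℝ) ^ p = 2 ^ (p - 1) * 2 := rpow_split' (by norm_num) p
  have fF : (τ + 1) ^ p = (τ + 1) ^ (p - 1) * (τ + 1) := rpow_split' (by linarith) p
  have H1 : τ ^ p * δ ^ p ≤ d ^ p := by
    rw [← Real.mul_rpow hτ0.le hδ.le]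
    exact Real.rpow_le_rpow (by positivity) hd hp0.le
  have H1b : δ ^ p ≤ d ^ p :=
    Real.rpow_le_rpow hδ.le (le_trans (by nlinarith) hd) hp0.le
  have H2 : τ ^ (p - 1) * t ^ (p - 1) ≤ (τ - 1) ^ (p - 1) * d ^ (p - 1) := by
    rw [← Real.mul_rpow hτ0.le ht.le, ← Real.mul_rpow (by linarith) hd0.le]
    apply Real.rpow_le_rpow (by positivity) _ hp1
    rw [ht_def]; nlinarith
  have H3 : (τ + 1) ^ p ≤ 2 ^ (p - 1) * (τ ^ p + 1) := by
    have := two_rpow_ineq' hτ0.le (zero_le_one) hp.le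
    simpa [Real.one_rpow] using this
  have H4 : (τ - 1) ^ (p - 1) ≤ (τ + 1) ^ (p - 1) :=
    Real.rpow_le_rpow (by linarith) (by linarith) hp1
  have nT1 : 0 ≤ t ^ (p - 1) := Real.rpow_nonneg ht.le _
  have nD1 : 0 ≤ d ^ (p - 1) := Real.rpow_nonneg hd0.le _
  have nS1 : (0:ℝ) ≤ 2 ^ (p - 1) := Real.rpow_nonneg (by norm_num) _
  have nD : 0 ≤ d ^ p := Real.rpow_nonneg hd0.le _
  have hmulpos : 0 < τ * τ ^ p := mul_pos hτ0 hPpos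
  rw [← mul_le_mul_iff_right₀ hmulpos]
  have hc1 : τ * (d + δ) ≤ (τ + 1) * d := by nlinarith
  have hK : (τ ^ p - 1) * d ^ p ≤ 2 * (τ ^ p * d ^ p - τ ^ p * δ ^ p) := by
    linarith [mul_le_mul_of_nonneg_left H1b hPpos.le, H1]
  have hnn1 : (0:ℝ) ≤ (τ ^ p - 1) * t ^ (p - 1) * τ ^ p * t :=
    mul_nonneg (mul_nonneg (mul_nonneg nP1 nT1) hPpos.le) ht.le
  have hnn2 : (0:ℝ) ≤ (τ ^ p - 1) * ((τ + 1) * d) * t * τ :=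
    mul_nonneg (mul_nonneg (mul_nonneg nP1 (by positivity)) ht.le) hτ0.le
  have hnn3 : (0:ℝ) ≤ (τ ^ p - 1) * d ^ (p - 1) * ((τ + 1) * d) * t * τ :=
    mul_nonneg (mul_nonneg (mul_nonneg (mul_nonneg nP1 nD1) (by positivity)) ht.le) hτ0.le
  have hnn4 : (0:ℝ) ≤ (τ ^ p - 1) * d ^ p * t * τ :=
    mul_nonneg (mul_nonneg (mul_nonneg nP1 nD) ht.le) hτ0.le
  have hnn5 : (0:ℝ) ≤ 2 ^ (p - 1) * (τ ^ p + 1) * t * τ :=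
    mul_nonneg (mul_nonneg (mul_nonneg nS1 (by linarith)) ht.le) hτ0.le
  calc τ * τ ^ p * ((τ ^ p - 1) * t ^ p * (d + δ))
      = ((τ ^ p - 1) * t ^ (p - 1) * τ ^ p * t) * (τ * (d + δ)) := by rw [fT]; ring
    _ ≤ ((τ ^ p - 1) * t ^ (p - 1) * τ ^ p * t) * ((τ + 1) * d) :=
        mul_le_mul_of_nonneg_left hc1 hnn1
    _ = ((τ ^ p - 1) * ((τ + 1) * d) * t * τ) * (τ ^ (p - 1) * t ^ (p - 1)) := by
        rw [fP]; ring
    _ ≤ ((τ ^ p - 1) * ((τ + 1) * d) * t * τ) * ((τ - 1) ^ (p - 1) * d ^ (p - 1)) :=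
        mul_le_mul_of_nonneg_left H2 hnn2
    _ = ((τ ^ p - 1) * d ^ (p - 1) * ((τ + 1) * d) * t * τ) * ((τ - 1) ^ (p - 1)) := by ring
    _ ≤ ((τ ^ p - 1) * d ^ (p - 1) * ((τ + 1) * d) * t * τ) * ((τ + 1) ^ (p - 1)) :=
        mul_le_mul_of_nonneg_left H4 hnn3
    _ = ((τ ^ p - 1) * d ^ p * t * τ) * ((τ + 1) ^ p) := by rw [fF, fD]; ring
    _ ≤ ((τ ^ p - 1) * d ^ p * t * τ) * (2 ^ (p - 1) * (τ ^ p + 1)) :=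
        mul_le_mul_of_nonneg_left H3 hnn4
    _ = (2 ^ (p - 1) * (τ ^ p + 1) * t * τ) * ((τ ^ p - 1) * d ^ p) := by ring
    _ ≤ (2 ^ (p - 1) * (τ ^ p + 1) * t * τ) * (2 * (τ ^ p * d ^ p - τ ^ p * δ ^ p)) :=
        mul_le_mul_of_nonneg_left hK hnn5
    _ = τ * τ ^ p * (2 ^ p * (τ ^ p + 1) * t * (d ^ p - δ ^ p)) := by rw [f2]; ring

set_option maxHeartbeats 2000000 in
/-- **Corollary 4.6: lower bound for the SDP parameter.** Under the
assumptions of Theorems 4.3 and 4.5, a regularization parameter `α* ∈ Δ_θ` chosen according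
to the sequential discrepancy principle satisfies
`α* ≥ (θ/(p 2^{p−1})) ((τ^p − 1)/(τ^p + 1)) Φ_{q,w}((τ−1)δ)` with
`Φ_{q,w}(t) = t^p / φ_{q,w}(t)`. -/
theorem sdp_parameter_lower_bound
    {X Y : Type*} [NormedAddCommGroup X] [InnerProductSpace ℝ X] [CompleteSpace X]
    [NormedAddCommGroup Y] [NormedSpace ℝ Y]
    (u : ℕ → X) (hu : Orthonormal ℝ u)
    (hspan : (Submodule.span ℝ (Set.range u)).topologicalClosure = ⊤)
    (A : X →L[ℝ] Y) (hAinj : Function.Injective A)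
    (hrange : ¬ IsClosed (Set.range A))
    (p q : ℝ) (hp : 1 < p) (hq0 : 0 < q) (hq1 : q < 1)
    (w : ℕ → ℝ) (w0 : ℝ) (hw0 : 0 < w0) (hw : ∀ k, w0 ≤ w k)
    (xdag : X) (hne : xdag ≠ 0) (hxdag : MemMqw u w q xdag)
    (f : ℕ → Y →L[ℝ] ℝ)
    (hf : ∀ k, ⟪xdag, u k⟫ ≠ 0 → ∀ x : X, ⟪u k, x⟫ = f k (A x))
    (θ α₀ τ : ℝ) (hθ0 : 0 < θ) (hθ1 : θ < 1) (hα₀ : 0 < α₀) (hτ : 1 < τ) :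
    ∀ δ : ℝ, 0 < δ → ∀ ydel : Y, ‖A xdag - ydel‖ ≤ δ →
      ∀ xm : ℝ → X, (∀ α ∈ Dtheta θ α₀, IsTikMinimizer u w q A p α ydel (xm α)) →
        ∀ αstar ∈ Dtheta θ α₀,
          ‖A (xm αstar) - ydel‖ ≤ τ * δ → τ * δ < ‖A (xm (αstar / θ)) - ydel‖ →
            (θ / (p * 2 ^ (p - 1))) * ((τ ^ p - 1) / (τ ^ p + 1)) *
                (((τ - 1) * δ) ^ p / phiIdx u w q xdag f ((τ - 1) * δ)) ≤ αstar := by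
  intro δ hδ ydel hyd xm hxm αstar hαs hdisc1 hdisc2
  obtain ⟨j, hj⟩ := hαs
  have hτ0 : (0:ℝ) < τ := by linarith
  have hp0 : (0:ℝ) < p := by linarith
  have hαpos : 0 < αstar := by rw [hj]; exact mul_pos (zpow_pos hθ0 j) hα₀
  have hα'mem : αstar / θ ∈ Dtheta θ α₀ :=
    ⟨j - 1, by rw [hj, zpow_sub₀ hθ0.ne']; field_simp⟩
  have hα'pos : 0 < αstar / θ := div_pos hαpos hθ0
  obtain ⟨hmemα, hmin⟩ := hxm _ hα'mem
  set xα := xm (αstar / θ) with hxα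
  set d := ‖A xα - ydel‖ with hd_def
  have hτδd : τ * δ < d := hdisc2
  have hd0 : 0 < d := lt_trans (by nlinarith) hτδd
  set t := (τ - 1) * δ with ht_def
  have ht : 0 < t := by rw [ht_def]; nlinarith
  -- a support index exists
  have hk₀ : ∃ k, ⟪xdag, u k⟫ ≠ 0 := by
    by_contra hcon
    push_neg at hcon
    have hbot : (Submodule.span ℝ (Set.range u))ᗮ = ⊥ :=
      (Submodule.topologicalClosure_eq_top_iff).mp hspan
    have hxmem : xdag ∈ (Submodule.span ℝ (Set.range u))ᗮ := by
      rw [Submodule.mem_orthogonal]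
      intro y hy
      induction hy using Submodule.span_induction with
      | mem z hz =>
          obtain ⟨k, rfl⟩ := hz
          rw [real_inner_comm]
          exact hcon k
      | zero => simp
      | add y z _ _ ihy ihz => rw [inner_add_left, ihy, ihz]; ring
      | smul c y _ ihy => rw [real_inner_smul_left, ihy]; ring
    rw [hbot, Submodule.mem_bot] at hxmem
    exact hne hxmem
  obtain ⟨k₀, hk₀c⟩ := hk₀
  have hfk : 0 < ‖f k₀‖ := by
    rw [norm_pos_iff]
    intro h0
    have h1 : ⟪u k₀, u k₀⟫ = f k₀ (A (u k₀)) := hf k₀ hk₀c (u k₀)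
    rw [h0, ContinuousLinearMap.zero_apply, real_inner_self_eq_norm_mul_norm,
      hu.1 k₀] at h1
    norm_num at h1
  have hwpos : ∀ k, 0 < w k := fun k => lt_of_lt_of_le hw0 (hw k)
  have hwn : ∀ k, 0 ≤ w k := fun k => (hwpos k).le
  set It := ⨅ n : ℕ, gIdx u w q xdag f t n with hIt_def
  have hphi_eq : phiIdx u w q xdag f t = 2 * It := rfl
  have hItpos : 0 < It :=
    gIdx_inf_pos u w q xdag f hwpos hxdag k₀ hk₀c hfk ht
  have hφpos : 0 < phiIdx u w q xdag f t := by rw [hphi_eq]; linarith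
  -- Tikhonov minimality comparison with x†
  have hTik := hmin xdag hxdag
  unfold Tik at hTik
  have hnp : ‖A xdag - ydel‖ ^ p ≤ δ ^ p :=
    Real.rpow_le_rpow (norm_nonneg _) hyd hp0.le
  have h1p : (0:ℝ) ≤ 1 / p := by positivity
  have hE0 : (1/p) * d ^ p + (αstar/θ) * Rqw u w q xα
      ≤ (1/p) * δ ^ p + (αstar/θ) * Rqw u w q xdag := by
    have := mul_le_mul_of_nonneg_left hnp h1p
    linarith [hTik]
  -- variational inequality
  have hAs : ‖A xdag - A xα‖ ≤ d + δ := by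
    have hABC : A xdag - A xα = (A xdag - ydel) - (A xα - ydel) := by abel
    rw [hABC]
    calc ‖(A xdag - ydel) - (A xα - ydel)‖ ≤ ‖A xdag - ydel‖ + ‖A xα - ydel‖ :=
          norm_sub_le _ _
      _ ≤ δ + d := add_le_add hyd le_rfl
      _ = d + δ := by ring
  have hVI : Rqw u w q xdag - Rqw u w q xα ≤ ⨅ n, gIdx u w q xdag f (d+δ) n :=
    le_ciInf fun n => by
      linarith [vi_per_n u w q xdag f A hf hwn hq0 hq1.le hxdag xα hmemα hAs n]
  have htdd : t ≤ d + δ := by rw [ht_def]; nlinarith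
  have hscale : (⨅ n, gIdx u w q xdag f (d+δ) n) ≤ ((d+δ)/t) * It :=
    gIdx_inf_scale u w q xdag f hwn hq1.le ht htdd
  -- cleared key inequality
  have hkey1 : t * (d ^ p - δ ^ p) ≤ p * (αstar/θ) * (d + δ) * It := by
    have h1 : (1/p) * (d ^ p - δ ^ p)
        ≤ (αstar/θ) * (Rqw u w q xdag - Rqw u w q xα) := by nlinarith [hE0]
    have h2 : Rqw u w q xdag - Rqw u w q xα ≤ ((d+δ)/t) * It := hVI.trans hscale
    have h3 : (1/p) * (d ^ p - δ ^ p) ≤ (αstar/θ) * (((d+δ)/t) * It) :=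
      h1.trans (mul_le_mul_of_nonneg_left h2 hα'pos.le)
    calc t * (d ^ p - δ ^ p) = (p * t) * ((1/p) * (d ^ p - δ ^ p)) := by
          field_simp <;> ring
      _ ≤ (p * t) * ((αstar/θ) * (((d+δ)/t) * It)) :=
          mul_le_mul_of_nonneg_left h3 (by positivity)
      _ = p * (αstar/θ) * (d + δ) * It := by
          field_simp <;> ring
  -- arithmetic inequality
  have hS : (τ ^ p - 1) * t ^ p * (d + δ)
      ≤ 2 ^ p * (τ ^ p + 1) * t * (d ^ p - δ ^ p) := by
    rw [ht_def]
    exact arith_S hτ hδ hp hτδd.le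
  have hP1 : 1 < τ ^ p := Real.one_lt_rpow_iff_of_pos hτ0 |>.mpr (Or.inl ⟨hτ, hp0⟩)
  have hτp1 : (0:ℝ) < τ ^ p + 1 := by linarith
  have nS1 : (0:ℝ) < 2 ^ (p - 1) := Real.rpow_pos_of_pos (by norm_num) _
  have f2 : (2:ℝ) ^ p = 2 ^ (p - 1) * 2 := rpow_split' (by norm_num) p
  have hfinal : (τ ^ p - 1) * t ^ p
      ≤ 2 ^ (p - 1) * (τ ^ p + 1) * p * (αstar/θ) * phiIdx u w q xdag f t := by
    have n2p : (0:ℝ) ≤ 2 ^ p * (τ ^ p + 1) := by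
      have : (0:ℝ) < 2 ^ p := Real.rpow_pos_of_pos (by norm_num) _
      positivity
    have hstep : (τ ^ p - 1) * t ^ p * (d + δ)
        ≤ (2 ^ (p - 1) * (τ ^ p + 1) * p * (αstar/θ) * phiIdx u w q xdag f t) * (d + δ) := by
      calc (τ ^ p - 1) * t ^ p * (d + δ)
          ≤ 2 ^ p * (τ ^ p + 1) * t * (d ^ p - δ ^ p) := hS
        _ = 2 ^ p * (τ ^ p + 1) * (t * (d ^ p - δ ^ p)) := by ring
        _ ≤ 2 ^ p * (τ ^ p + 1) * (p * (αstar/θ) * (d + δ) * It) :=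
            mul_le_mul_of_nonneg_left hkey1 n2p
        _ = (2 ^ (p - 1) * (τ ^ p + 1) * p * (αstar/θ) * (2 * It)) * (d + δ) := by
            rw [f2]; ring
        _ = (2 ^ (p - 1) * (τ ^ p + 1) * p * (αstar/θ) * phiIdx u w q xdag f t) * (d + δ) := by
            rw [hphi_eq]
    exact le_of_mul_le_mul_right hstep (by positivity)
  -- conclude
  have hden : (0:ℝ) < p * 2 ^ (p - 1) * (τ ^ p + 1) * phiIdx u w q xdag f t := by
    have := nS1
    positivity
  rw [div_mul_div_comm, div_mul_div_comm,
    div_le_iff₀ hden]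
  have hcancel : θ * (αstar / θ) = αstar := by field_simp
  have hmul := mul_le_mul_of_nonneg_left hfinal hθ0.le
  nlinarith [hmul, hcancel]
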